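/- For pairwise distinct positive reals x₁, x₂, x₃ with K < 0 (resp. K > 0), the unique inflection point p* of L(p) = (Σᵢ xᵢ^p)/(Σᵢ xᵢ^(p-1)) satisfies p* < 1 (resp. p* > 1), where K = (x₁−x₂)log(x₁/x₂)log(x₁x₂/x₃²) + (x₁−x₃)log(x₁/x₃)log(x₁x₃/x₂²) + (x₂−x₃)log(x₂/x₃)log(x₂x₃/x₁²). -/

import Mathlib

open Real

private lemma sgn_pair_nonneg_exp {x y z : ℝ} (hx : 0 < x) (hy : 0 < y) (hz : 0 ≤ z) :
    (x - y) * (y ^ z - x ^ z) ≤ 0 := by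
  rcases le_total x y with h | h
  · have h2 := Real.rpow_le_rpow hx.le h hz
    nlinarith
  · have h2 := Real.rpow_le_rpow hy.le h hz
    nlinarith

private lemma sgn_pair_nonpos_exp {x y z : ℝ} (hx : 0 < x) (hy : 0 < y) (hz : z ≤ 0) :
    0 ≤ (x - y) * (y ^ z - x ^ z) := by
  rcases le_total x y with h | h
  · have h2 := Real.rpow_le_rpow_of_nonpos hx h hz
    nlinarith
  · have h2 := Real.rpow_le_rpow_of_nonpos hy h hz
    nlinarith

set_option maxHeartbeats 1000000

theorem lehmer_three_inflection_location (x₁ x₂ x₃ : ℝ)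
    (hx₁ : 0 < x₁) (hx₂ : 0 < x₂) (hx₃ : 0 < x₃)
    (h12 : x₁ ≠ x₂) (h13 : x₁ ≠ x₃) (h23 : x₂ ≠ x₃)
    (p' : ℝ)
    (hp' : iteratedDeriv 2
      (fun q : ℝ => (x₁ ^ q + x₂ ^ q + x₃ ^ q) /
        (x₁ ^ (q - 1) + x₂ ^ (q - 1) + x₃ ^ (q - 1))) p' = 0) :
    (((x₁ - x₂) * Real.log (x₁ / x₂) * Real.log (x₁ * x₂ / (x₃ * x₃)) +
        (x₁ - x₃) * Real.log (x₁ / x₃) * Real.log (x₁ * x₃ / (x₂ * x₂)) +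
        (x₂ - x₃) * Real.log (x₂ / x₃) * Real.log (x₂ * x₃ / (x₁ * x₁))) < 0 →
      p' < 1) ∧
    (0 < ((x₁ - x₂) * Real.log (x₁ / x₂) * Real.log (x₁ * x₂ / (x₃ * x₃)) +
        (x₁ - x₃) * Real.log (x₁ / x₃) * Real.log (x₁ * x₃ / (x₂ * x₂)) +
        (x₂ - x₃) * Real.log (x₂ / x₃) * Real.log (x₂ * x₃ / (x₁ * x₁))) →
      1 < p') := by
  set a₁ := Real.log x₁ with ha₁
  set a₂ := Real.log x₂ with ha₂
  set a₃ := Real.log x₃ with ha₃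
  -- the six building-block functions
  set U : ℝ → ℝ := fun q => x₁ ^ q + x₂ ^ q + x₃ ^ q with hU
  set U1 : ℝ → ℝ := fun q => x₁ ^ q * a₁ + x₂ ^ q * a₂ + x₃ ^ q * a₃ with hU1
  set U2 : ℝ → ℝ := fun q => x₁ ^ q * a₁ * a₁ + x₂ ^ q * a₂ * a₂ + x₃ ^ q * a₃ * a₃ with hU2
  set V : ℝ → ℝ := fun q => x₁ ^ (q - 1) + x₂ ^ (q - 1) + x₃ ^ (q - 1) with hV
  set V1 : ℝ → ℝ := fun q => x₁ ^ (q - 1) * a₁ + x₂ ^ (q - 1) * a₂ + x₃ ^ (q - 1) * a₃ with hV1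
  set V2 : ℝ → ℝ := fun q => x₁ ^ (q - 1) * a₁ * a₁ + x₂ ^ (q - 1) * a₂ * a₂
      + x₃ ^ (q - 1) * a₃ * a₃ with hV2
  have hexp : ∀ (x : ℝ), 0 < x → ∀ (c q : ℝ),
      HasDerivAt (fun q : ℝ => x ^ q * c) (x ^ q * Real.log x * c) q := by
    intro x hx c q
    simpa [mul_comm, mul_assoc, mul_left_comm] using
      ((Real.hasStrictDerivAt_const_rpow hx q).hasDerivAt.mul_const c)
  have hexp' : ∀ (x : ℝ), 0 < x → ∀ (c q : ℝ),
      HasDerivAt (fun q : ℝ => x ^ (q - 1) * c) (x ^ (q - 1) * Real.log x * c) q := by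
    intro x hx c q
    have h1 : HasDerivAt (fun q : ℝ => q - 1) 1 q := (hasDerivAt_id q).sub_const 1
    have := ((Real.hasStrictDerivAt_const_rpow hx (q - 1)).hasDerivAt.mul_const c).comp q h1
    simpa [Function.comp_def, mul_comm, mul_assoc, mul_left_comm] using this
  have hUd : ∀ q, HasDerivAt U (U1 q) q := by
    intro q
    have h1 := hexp x₁ hx₁ 1 q
    have h2 := hexp x₂ hx₂ 1 q
    have h3 := hexp x₃ hx₃ 1 q
    simp only [mul_one] at h1 h2 h3
    simpa [Pi.add_def, hU, hU1, ha₁, ha₂, ha₃] using (h1.add h2).add h3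
  have hU1d : ∀ q, HasDerivAt U1 (U2 q) q := by
    intro q
    simpa [Pi.add_def, hU1, hU2, ha₁, ha₂, ha₃] using
      (((hexp x₁ hx₁ a₁ q).add (hexp x₂ hx₂ a₂ q)).add (hexp x₃ hx₃ a₃ q))
  have hVd : ∀ q, HasDerivAt V (V1 q) q := by
    intro q
    have h1 := hexp' x₁ hx₁ 1 q
    have h2 := hexp' x₂ hx₂ 1 q
    have h3 := hexp' x₃ hx₃ 1 q
    simp only [mul_one] at h1 h2 h3
    simpa [Pi.add_def, hV, hV1, ha₁, ha₂, ha₃] using (h1.add h2).add h3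
  have hV1d : ∀ q, HasDerivAt V1 (V2 q) q := by
    intro q
    simpa [Pi.add_def, hV1, hV2, ha₁, ha₂, ha₃] using
      (((hexp' x₁ hx₁ a₁ q).add (hexp' x₂ hx₂ a₂ q)).add (hexp' x₃ hx₃ a₃ q))
  have hVpos : ∀ q, 0 < V q := by
    intro q
    have := Real.rpow_pos_of_pos hx₁ (q - 1)
    have := Real.rpow_pos_of_pos hx₂ (q - 1)
    have := Real.rpow_pos_of_pos hx₃ (q - 1)
    simp only [hV]
    positivity
  have hVne : ∀ q, V q ≠ 0 := fun q => (hVpos q).ne'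
  set D1 : ℝ → ℝ := fun q => (U1 q * V q - U q * V1 q) / V q ^ 2 with hD1
  have hLd : ∀ q, HasDerivAt (fun q : ℝ => U q / V q) (D1 q) q := by
    intro q
    exact (hUd q).div (hVd q) (hVne q)
  have hderivL : deriv (fun q : ℝ => U q / V q) = D1 := funext fun q => (hLd q).deriv
  -- second derivative at p'
  have hNum : HasDerivAt (fun q => U1 q * V q - U q * V1 q)
      ((U2 p' * V p' + U1 p' * V1 p') - (U1 p' * V1 p' + U p' * V2 p')) p' :=
    ((hU1d p').mul (hVd p')).sub ((hUd p').mul (hV1d p'))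
  have hDen : HasDerivAt (fun q => V q ^ 2) ((2 : ℕ) * V p' ^ 1 * V1 p') p' := by
    simpa [Pi.pow_def] using (hVd p').pow 2
  have hD1d : HasDerivAt D1
      ((((U2 p' * V p' + U1 p' * V1 p') - (U1 p' * V1 p' + U p' * V2 p')) * V p' ^ 2
        - (U1 p' * V p' - U p' * V1 p') * ((2 : ℕ) * V p' ^ 1 * V1 p')) / (V p' ^ 2) ^ 2) p' :=
    hNum.div hDen (pow_ne_zero 2 (hVne p'))
  have hiter : iteratedDeriv 2 (fun q : ℝ => U q / V q) p' =
      (((U2 p' * V p' + U1 p' * V1 p') - (U1 p' * V1 p' + U p' * V2 p')) * V p' ^ 2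
        - (U1 p' * V p' - U p' * V1 p') * ((2 : ℕ) * V p' ^ 1 * V1 p')) / (V p' ^ 2) ^ 2 := by
    rw [show (2 : ℕ) = 1 + 1 from rfl, iteratedDeriv_succ, iteratedDeriv_one, hderivL]
    exact hD1d.deriv
  have hp'' : (((U2 p' * V p' + U1 p' * V1 p') - (U1 p' * V1 p' + U p' * V2 p')) * V p' ^ 2
        - (U1 p' * V p' - U p' * V1 p') * ((2 : ℕ) * V p' ^ 1 * V1 p')) / (V p' ^ 2) ^ 2 = 0 := by
    rw [← hiter]
    exact hp'
  -- extract the vanishing of N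
  have hN : (U2 p' * V p' - U p' * V2 p') * V p'
      - 2 * (U1 p' * V p' - U p' * V1 p') * V1 p' = 0 := by
    have hvne := hVne p'
    rw [div_eq_zero_iff] at hp''
    rcases hp'' with h | h
    · have hv := hVne p'
      have : V p' * ((U2 p' * V p' - U p' * V2 p') * V p'
          - 2 * (U1 p' * V p' - U p' * V1 p') * V1 p') = 0 := by
        rw [← h]; push_cast; ring
      rcases mul_eq_zero.mp this with h' | h'
      · exact absurd h' hv
      · exact h'
    · exact absurd h (pow_ne_zero 2 (pow_ne_zero 2 hvne))
  -- now unfold into w and x variables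
  set w₁ := x₁ ^ (p' - 1) with hw₁
  set w₂ := x₂ ^ (p' - 1) with hw₂
  set w₃ := x₃ ^ (p' - 1) with hw₃
  have hXe : ∀ x : ℝ, 0 < x → x ^ p' = x ^ (p' - 1) * x := by
    intro x hx
    have h : p' = (p' - 1) + 1 := by ring
    nth_rewrite 1 [h]
    rw [Real.rpow_add hx, Real.rpow_one]
  have hw₁p : 0 < w₁ := Real.rpow_pos_of_pos hx₁ _
  have hw₂p : 0 < w₂ := Real.rpow_pos_of_pos hx₂ _
  have hw₃p : 0 < w₃ := Real.rpow_pos_of_pos hx₃ _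
  set K := (x₁ - x₂) * (a₁ - a₂) * (a₁ + a₂ - 2 * a₃) +
      (x₁ - x₃) * (a₁ - a₃) * (a₁ + a₃ - 2 * a₂) +
      (x₂ - x₃) * (a₂ - a₃) * (a₂ + a₃ - 2 * a₁) with hK
  have hident : (U2 p' * V p' - U p' * V2 p') * V p'
      - 2 * (U1 p' * V p' - U p' * V1 p') * V1 p'
      = w₁ * w₂ * w₃ * K
        + ((a₁ - a₂) ^ 2 * (w₁ * w₂)) * ((x₁ - x₂) * (w₂ - w₁))
        + ((a₁ - a₃) ^ 2 * (w₁ * w₃)) * ((x₁ - x₃) * (w₃ - w₁))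
        + ((a₂ - a₃) ^ 2 * (w₂ * w₃)) * ((x₂ - x₃) * (w₃ - w₂)) := by
    simp only [hU, hU1, hU2, hV, hV1, hV2, hK, ← hw₁, ← hw₂, ← hw₃,
      hXe x₁ hx₁, hXe x₂ hx₂, hXe x₃ hx₃]
    ring
  rw [hident] at hN
  -- rewrite the statement's K
  have hlog12 : Real.log (x₁ / x₂) = a₁ - a₂ := Real.log_div hx₁.ne' hx₂.ne'
  have hlog13 : Real.log (x₁ / x₃) = a₁ - a₃ := Real.log_div hx₁.ne' hx₃.ne'
  have hlog23 : Real.log (x₂ / x₃) = a₂ - a₃ := Real.log_div hx₂.ne' hx₃.ne'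
  have hlogA : Real.log (x₁ * x₂ / (x₃ * x₃)) = a₁ + a₂ - 2 * a₃ := by
    rw [Real.log_div (by positivity) (by positivity), Real.log_mul hx₁.ne' hx₂.ne',
      Real.log_mul hx₃.ne' hx₃.ne']
    ring
  have hlogB : Real.log (x₁ * x₃ / (x₂ * x₂)) = a₁ + a₃ - 2 * a₂ := by
    rw [Real.log_div (by positivity) (by positivity), Real.log_mul hx₁.ne' hx₃.ne',
      Real.log_mul hx₂.ne' hx₂.ne']
    ring
  have hlogC : Real.log (x₂ * x₃ / (x₁ * x₁)) = a₂ + a₃ - 2 * a₁ := by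
    rw [Real.log_div (by positivity) (by positivity), Real.log_mul hx₂.ne' hx₃.ne',
      Real.log_mul hx₁.ne' hx₁.ne']
    ring
  rw [hlog12, hlog13, hlog23, hlogA, hlogB, hlogC]
  have hW : 0 < w₁ * w₂ * w₃ := by positivity
  constructor
  · intro hKneg
    by_contra hcon
    push_neg at hcon
    have hz : (0 : ℝ) ≤ p' - 1 := by linarith
    have t12 : ((a₁ - a₂) ^ 2 * (w₁ * w₂)) * ((x₁ - x₂) * (w₂ - w₁)) ≤ 0 :=
      mul_nonpos_of_nonneg_of_nonpos (by positivity)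
        (sgn_pair_nonneg_exp hx₁ hx₂ hz)
    have t13 : ((a₁ - a₃) ^ 2 * (w₁ * w₃)) * ((x₁ - x₃) * (w₃ - w₁)) ≤ 0 :=
      mul_nonpos_of_nonneg_of_nonpos (by positivity)
        (sgn_pair_nonneg_exp hx₁ hx₃ hz)
    have t23 : ((a₂ - a₃) ^ 2 * (w₂ * w₃)) * ((x₂ - x₃) * (w₃ - w₂)) ≤ 0 :=
      mul_nonpos_of_nonneg_of_nonpos (by positivity)
        (sgn_pair_nonneg_exp hx₂ hx₃ hz)
    have hWK : w₁ * w₂ * w₃ * K < 0 := mul_neg_of_pos_of_neg hW (by rw [hK]; linarith)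
    linarith
  · intro hKpos
    by_contra hcon
    push_neg at hcon
    have hz : p' - 1 ≤ 0 := by linarith
    have t12 : 0 ≤ ((a₁ - a₂) ^ 2 * (w₁ * w₂)) * ((x₁ - x₂) * (w₂ - w₁)) :=
      mul_nonneg (by positivity) (sgn_pair_nonpos_exp hx₁ hx₂ hz)
    have t13 : 0 ≤ ((a₁ - a₃) ^ 2 * (w₁ * w₃)) * ((x₁ - x₃) * (w₃ - w₁)) :=
      mul_nonneg (by positivity) (sgn_pair_nonpos_exp hx₁ hx₃ hz)
    have t23 : 0 ≤ ((a₂ - a₃) ^ 2 * (w₂ * w₃)) * ((x₂ - x₃) * (w₃ - w₂)) :=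
      mul_nonneg (by positivity) (sgn_pair_nonpos_exp hx₂ hx₃ hz)
    have hWK : 0 < w₁ * w₂ * w₃ * K := mul_pos hW (by rw [hK]; linarith)
    linarith
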